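/- Assume Situation (*). No two of the tuples in the families F_I and F_II with distinct parameters are equivalent: if F_I(k, ℓ) is equivalent to F_I(k', ℓ') then (k, ℓ) = (k', ℓ'); if F_II(k, m) is equivalent to F_II(k', m') then (k, m) = (k', m'); and no F_I(k, ℓ) is equivalent to any F_II(k', m') (parameters ranging over the admissible ranges for each family). -/

import Mathlib

/-- A Hurwitz factorization for `(d, r, 0, (e 0, …, e (r-1)))`. -/
def HurwitzFactorization (d r : ℕ) (e : Fin r → ℕ)
    (σ : Fin r → Equiv.Perm (Fin d)) : Prop :=
  (∀ i, (σ i).IsCycle ∧ (σ i).support.card = e i) ∧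
  (List.ofFn σ).prod = 1 ∧
  ∀ x y : Fin d, ∃ g ∈ Subgroup.closure (Set.range σ), g x = y

/-- Two tuples are equivalent if they are related by simultaneous conjugation. -/
def HEquiv {d r : ℕ} (σ σ' : Fin r → Equiv.Perm (Fin d)) : Prop :=
  ∃ τ : Equiv.Perm (Fin d), ∀ i, σ' i = τ * σ i * τ⁻¹

/-- The ascending run `a, a+1, …, b` (empty when `b = a - 1`). -/
def ascList (a b : ℕ) : List ℕ := List.range' a (b + 1 - a)

/-- The descending run `b, b-1, …, a` (empty when `b = a - 1`). -/
def descList (b a : ℕ) : List ℕ := (List.range' a (b + 1 - a)).reverse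

/-- The element of `Fin d` corresponding to `n ∈ {1, …, d}`. -/
def toFin (d : ℕ) (hd : 0 < d) (n : ℕ) : Fin d := ⟨(n - 1) % d, Nat.mod_lt _ hd⟩

/-- The auxiliary cycle `σ = (k, k+1, …, e₃+e₄-k)` of family I. -/
def sigmaAux (d : ℕ) (hd : 0 < d) (e3 e4 k : ℕ) : Equiv.Perm (Fin d) :=
  ((ascList k (e3 + e4 - k)).map (toFin d hd)).formPerm

/-- The tuple `F_I(k, ℓ)` of family I:
`σ₁ = (d, d-1, …, e₃+e₄+1-k, σ^{-(d+2-k-e₁)}(ℓ), …, σ^{-(e₃+e₄+1-2k)}(ℓ) = ℓ)`,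
`σ₂ = (e₃+e₄+1-k, …, d-1, d, ℓ, σ⁻¹(ℓ), …, σ^{-(d+1-k-e₁)}(ℓ))`,
`σ₃ = (k, k-1, …, 2, 1, e₄+1, e₄+2, …, e₃+e₄-k)`, `σ₄ = (1, 2, …, e₄)`,
where `σ = (k, k+1, …, e₃+e₄-k)`. -/
def FI (d : ℕ) (hd : 0 < d) (e1 e3 e4 k l : ℕ) : Fin 4 → Equiv.Perm (Fin d) :=
  let σ := sigmaAux d hd e3 e4 k
  let lf : Fin d := toFin d hd l
  ![ ((descList d (e3 + e4 + 1 - k)).map (toFin d hd) ++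
      (List.range' (d + 2 - k - e1) (e1 + e3 + e4 - k - d)).map
        (fun j => (σ ^ j)⁻¹ lf)).formPerm,
     ((ascList (e3 + e4 + 1 - k) d).map (toFin d hd) ++
      (List.range' 0 (d + 2 - k - e1)).map (fun j => (σ ^ j)⁻¹ lf)).formPerm,
     ((descList k 1 ++ ascList (e4 + 1) (e3 + e4 - k)).map (toFin d hd)).formPerm,
     ((ascList 1 e4).map (toFin d hd)).formPerm ]

/-- The admissible parameter range for family I:
`e₃+e₄-d ≤ k ≤ e₃`, `k ≤ d+1-e₂` and `k ≤ ℓ ≤ e₃+e₄-k`. -/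
def AdmI (d e2 e3 e4 k l : ℕ) : Prop :=
  e3 + e4 - d ≤ k ∧ k ≤ e3 ∧ k ≤ d + 1 - e2 ∧ k ≤ l ∧ l ≤ e3 + e4 - k

/-- The tuple `F_II(k, m)` of family II:
`σ₁ = (m+e₁-1, m+e₁-2, …, m+1, m)`,
`σ₂ = (d, d-1, …, m+e₁, m+d+k-e₃-e₄, m+d-1+k-e₃-e₄, …, k)`,
`σ₃ = (k, k-1, …, 1, e₄+1, e₄+2, …, m+e₁-1, m, m-1, …, m+d+1+k-e₃-e₄, m+e₁, m+e₁+1, …, d)`,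
`σ₄ = (1, 2, …, e₄)`. -/
def FII (d : ℕ) (hd : 0 < d) (e1 e3 e4 k m : ℕ) : Fin 4 → Equiv.Perm (Fin d) :=
  ![ ((descList (m + e1 - 1) m).map (toFin d hd)).formPerm,
     ((descList d (m + e1) ++ descList (m + d + k - e3 - e4) k).map (toFin d hd)).formPerm,
     ((descList k 1 ++ ascList (e4 + 1) (m + e1 - 1) ++
       descList m (m + d + 1 + k - e3 - e4) ++
       ascList (m + e1) d).map (toFin d hd)).formPerm,
     ((ascList 1 e4).map (toFin d hd)).formPerm ]

/-- The admissible parameter range for family II: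
`1 ≤ k ≤ e₃+e₄-d-1`, `e₄-e₁+1 ≤ m ≤ d+1-e₁` and `m ≤ e₄`. -/
def AdmII (d e1 e3 e4 k m : ℕ) : Prop :=
  1 ≤ k ∧ k ≤ e3 + e4 - d - 1 ∧ e4 - e1 + 1 ≤ m ∧ m ≤ d + 1 - e1 ∧ m ≤ e4
section Base

/-- mod-cancellation helper -/
lemma aux_mod_small {Lv a v : ℕ} (ha : a < Lv) (hv : v ≤ Lv) :
    (a + v) % Lv = if a + v < Lv then a + v else a + v - Lv := by
  split_ifs with h
  · exact Nat.mod_eq_of_lt h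
  · rw [Nat.mod_eq_sub_mod (by omega), Nat.mod_eq_of_lt (by omega)]

lemma aux_idx_cancel {Lv a u u' : ℕ} (ha : a < Lv) (hu : u ≤ Lv) (hu' : u' ≤ Lv)
    (h : (a + u) % Lv = (a + u') % Lv) :
    u = u' ∨ (u = 0 ∧ u' = Lv) ∨ (u = Lv ∧ u' = 0) := by
  rw [aux_mod_small ha hu, aux_mod_small ha hu'] at h
  split_ifs at h <;> omega

variable {d : ℕ}

lemma toFin_val (hd : 0 < d) {n : ℕ} (h2 : n ≤ d) : (toFin d hd n).val = n - 1 :=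
  Nat.mod_eq_of_lt (by omega)

lemma toFin_inj (hd : 0 < d) {m n : ℕ} (hm1 : 1 ≤ m) (hm2 : m ≤ d)
    (hn1 : 1 ≤ n) (hn2 : n ≤ d) (h : toFin d hd m = toFin d hd n) : m = n := by
  have := congrArg Fin.val h
  rw [toFin_val hd hm2, toFin_val hd hn2] at this
  omega

lemma length_ascList (a b : ℕ) : (ascList a b).length = b + 1 - a := by
  simp [ascList]

lemma getElem_ascList_map (hd : 0 < d) (a b i : ℕ) (h : i < ((ascList a b).map (toFin d hd)).length) :
    ((ascList a b).map (toFin d hd))[i] = toFin d hd (a + i) := by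
  simp only [ascList, List.getElem_map, List.getElem_range']
  congr 1
  omega

lemma mem_ascList_map (hd : 0 < d) {a b : ℕ} {x : Fin d} :
    x ∈ (ascList a b).map (toFin d hd) ↔ ∃ n, a ≤ n ∧ n ≤ b ∧ toFin d hd n = x := by
  simp only [List.mem_map, ascList, List.mem_range'_1]
  constructor
  · rintro ⟨n, ⟨hn1, hn2⟩, rfl⟩; exact ⟨n, by omega, by omega, rfl⟩
  · rintro ⟨n, h1, h2, rfl⟩; exact ⟨n, by omega, rfl⟩

lemma mem_ascList_map_val (hd : 0 < d) {a b : ℕ} (ha : 1 ≤ a) (hb : b ≤ d) {x : Fin d} :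
    x ∈ (ascList a b).map (toFin d hd) ↔ a ≤ x.val + 1 ∧ x.val + 1 ≤ b := by
  rw [mem_ascList_map]
  constructor
  · rintro ⟨n, h1, h2, rfl⟩
    rw [toFin_val hd (by omega)]; omega
  · rintro ⟨h1, h2⟩
    refine ⟨x.val + 1, h1, h2, ?_⟩
    apply Fin.ext
    rw [toFin_val hd (by omega)]
    omega

lemma nodup_ascList_map (hd : 0 < d) {a b : ℕ} (ha : 1 ≤ a) (hb : b ≤ d) :
    ((ascList a b).map (toFin d hd)).Nodup := by
  refine List.Nodup.map_on ?_ (by simp [ascList, List.nodup_range'])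
  intro m hm n hn h
  simp only [ascList, List.mem_range'_1] at hm hn
  exact toFin_inj hd (by omega) (by omega) (by omega) (by omega) h

lemma descList_map (hd : 0 < d) (b a : ℕ) :
    (descList b a).map (toFin d hd) = ((ascList a b).map (toFin d hd)).reverse := by
  simp [descList, ascList]

lemma card_toFinset_ascList_map (hd : 0 < d) {a b : ℕ} (ha : 1 ≤ a) (hb : b ≤ d) :
    ((ascList a b).map (toFin d hd)).toFinset.card = b + 1 - a := by
  rw [List.toFinset_card_of_nodup (nodup_ascList_map hd ha hb)]
  simp [ascList]

/-- support of formPerm of a nodup list of length ≥ 2 -/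
lemma mem_support_formPerm {l : List (Fin d)} (h : l.Nodup) (h2 : 2 ≤ l.length) {x : Fin d} :
    x ∈ l.formPerm.support ↔ x ∈ l := by
  rw [List.support_formPerm_of_nodup l h (fun y hy => by
    apply_fun List.length at hy; simp at hy; omega)]
  exact List.mem_toFinset

end Base
section Helpers

variable {d : ℕ}

lemma conj_comm_apply {p τ : Equiv.Perm (Fin d)} (h : p = τ * p * τ⁻¹) (x : Fin d) :
    τ (p x) = p (τ x) := by
  conv_rhs => rw [h]
  simp [Equiv.Perm.mul_apply]

lemma conj_comm_inv_apply {p τ : Equiv.Perm (Fin d)} (h : p = τ * p * τ⁻¹) (x : Fin d) :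
    τ (p⁻¹ x) = p⁻¹ (τ x) := by
  have := conj_comm_apply h (p⁻¹ x)
  rw [(show ∀ (q : Equiv.Perm (Fin d)) y, q (q⁻¹ y) = y from fun q y => q.apply_symm_apply y)] at this
  rw [this, (show ∀ (q : Equiv.Perm (Fin d)) y, q⁻¹ (q y) = y from fun q y => q.symm_apply_apply y)]

lemma conj_comm_pow_apply {p τ : Equiv.Perm (Fin d)} (h : p = τ * p * τ⁻¹) (t : ℕ) (x : Fin d) :
    τ ((p ^ t) x) = (p ^ t) (τ x) := by
  induction t generalizing x with
  | zero => simp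
  | succ n ih =>
      rw [pow_succ, Equiv.Perm.mul_apply, Equiv.Perm.mul_apply, ih (p x), conj_comm_apply h]

variable (hd : 0 < d)

lemma length_ascList_map (a b : ℕ) : ((ascList a b).map (toFin d hd)).length = b + 1 - a := by
  simp [ascList]

lemma sigma4_apply {e4 n : ℕ} (he4d : e4 ≤ d) (he42 : 2 ≤ e4) (h1 : 1 ≤ n) (hn : n ≤ e4) :
    ((ascList 1 e4).map (toFin d hd)).formPerm (toFin d hd n) = toFin d hd (n % e4 + 1) := by
  have hlen : ((ascList 1 e4).map (toFin d hd)).length = e4 := by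
    rw [length_ascList_map]; omega
  have hidx : n - 1 < ((ascList 1 e4).map (toFin d hd)).length := by omega
  have hget : ((ascList 1 e4).map (toFin d hd))[n-1] = toFin d hd n := by
    rw [getElem_ascList_map]; congr 1; omega
  rw [← hget, List.formPerm_apply_getElem _ (nodup_ascList_map hd (by omega) he4d),
    getElem_ascList_map]
  congr 1
  rw [hlen]
  have hn1 : n - 1 + 1 = n := by omega
  rw [hn1]
  omega

lemma sigma4_pow_apply {e4 n t : ℕ} (he4d : e4 ≤ d) (he42 : 2 ≤ e4) (h1 : 1 ≤ n) (hn : n ≤ e4) :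
    (((ascList 1 e4).map (toFin d hd)).formPerm ^ t) (toFin d hd n)
      = toFin d hd ((n - 1 + t) % e4 + 1) := by
  have hlen : ((ascList 1 e4).map (toFin d hd)).length = e4 := by
    rw [length_ascList_map]; omega
  have hidx : n - 1 < ((ascList 1 e4).map (toFin d hd)).length := by omega
  have hget : ((ascList 1 e4).map (toFin d hd))[n-1] = toFin d hd n := by
    rw [getElem_ascList_map]; congr 1; omega
  rw [← hget, List.formPerm_pow_apply_getElem _ (nodup_ascList_map hd (by omega) he4d),
    getElem_ascList_map]
  congr 1
  rw [hlen]
  omega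

lemma sigma4_inv_apply {e4 n : ℕ} (he4d : e4 ≤ d) (he42 : 2 ≤ e4) (h1 : 1 ≤ n) (hn : n ≤ e4) :
    (((ascList 1 e4).map (toFin d hd)).formPerm)⁻¹ (toFin d hd n)
      = toFin d hd (if n = 1 then e4 else n - 1) := by
  rw [Equiv.Perm.inv_def, Equiv.symm_apply_eq]
  split_ifs with h
  · subst h
    rw [sigma4_apply hd he4d he42 (by omega) (by omega), Nat.mod_self]
  · rw [sigma4_apply hd he4d he42 (by omega) (by omega), Nat.mod_eq_of_lt (by omega)]
    congr 1
    omega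

/-- boundary lemma: the unique `x ∈ N[a,b]` with `σ₄⁻¹ x ∉ N[a,b]` is `N a`. -/
lemma sigma4_boundary {e4 a b : ℕ} (he4d : e4 ≤ d) (he42 : 2 ≤ e4) (ha : 1 ≤ a)
    (hab : a ≤ b) (hbe : b ≤ e4) (hlt : b + 1 - a < e4) {x : Fin d}
    (hx : x ∈ ((ascList a b).map (toFin d hd)).toFinset)
    (hinv : (((ascList 1 e4).map (toFin d hd)).formPerm)⁻¹ x
        ∉ ((ascList a b).map (toFin d hd)).toFinset) :
    x = toFin d hd a := by
  rw [List.mem_toFinset, mem_ascList_map] at hx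
  obtain ⟨n, hn1, hn2, rfl⟩ := hx
  by_contra hne
  have hna : a < n := by
    rcases Nat.lt_or_ge a n with h | h
    · exact h
    · exact absurd (by congr 1; omega) hne
  apply hinv
  rw [sigma4_inv_apply hd he4d he42 (by omega) (by omega), if_neg (by omega),
    List.mem_toFinset, mem_ascList_map]
  exact ⟨n - 1, by omega, by omega, rfl⟩

lemma sigma4_boundary_mem {e4 a b : ℕ} (he4d : e4 ≤ d) (he42 : 2 ≤ e4) (ha : 1 ≤ a)
    (hab : a ≤ b) (hbe : b ≤ e4) (hlt : b + 1 - a < e4) :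
    (((ascList 1 e4).map (toFin d hd)).formPerm)⁻¹ (toFin d hd a)
      ∉ ((ascList a b).map (toFin d hd)).toFinset := by
  rw [sigma4_inv_apply hd he4d he42 ha (by omega), List.mem_toFinset,
    mem_ascList_map_val hd ha (by omega)]
  split_ifs with h
  · rw [toFin_val hd he4d]; omega
  · rw [toFin_val hd (by omega)]; omega

end Helpers
section FamII

variable {d e1 e2 e3 e4 : ℕ} (hd : 0 < d)
variable (h1 : 2 ≤ e1) (h12 : e1 ≤ e2) (h23 : e2 ≤ e3) (h34 : e3 ≤ e4) (h4d : e4 ≤ d)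
variable (hS : e1 + e2 + e3 + e4 = 2 * d + 2)

section Km
variable {k m : ℕ}
variable (hk1 : 1 ≤ k) (hk2 : k + d + 1 ≤ e3 + e4) (hm1 : e4 + 1 ≤ m + e1)
  (hm2 : m + e1 ≤ d + 1) (hm3 : m ≤ e4)

include h1 h12 h23 h34 h4d hS hk1 hk2 hm1 hm2 hm3

lemma FII0_mem {x : Fin d} :
    x ∈ (FII d hd e1 e3 e4 k m 0).support ↔ m ≤ x.val + 1 ∧ x.val + 1 ≤ m + e1 - 1 := by
  show x ∈ ((descList (m + e1 - 1) m).map (toFin d hd)).formPerm.support ↔ _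
  rw [descList_map hd]
  rw [mem_support_formPerm (List.nodup_reverse.mpr (nodup_ascList_map hd (by omega) (by omega)))
    (by rw [List.length_reverse, length_ascList_map]; omega)]
  rw [List.mem_reverse, mem_ascList_map_val hd (by omega) (by omega)]

lemma FII1_mem {x : Fin d} :
    x ∈ (FII d hd e1 e3 e4 k m 1).support ↔
      (m + e1 ≤ x.val + 1 ∧ x.val + 1 ≤ d) ∨ (k ≤ x.val + 1 ∧ x.val + 1 ≤ m + d + k - e3 - e4) := by
  show x ∈ ((descList d (m + e1) ++ descList (m + d + k - e3 - e4) k).map (toFin d hd)).formPerm.support ↔ _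
  rw [List.map_append, descList_map hd, descList_map hd]
  rw [mem_support_formPerm ?nd ?ln]
  case nd =>
    rw [List.nodup_append]
    refine ⟨List.nodup_reverse.mpr (nodup_ascList_map hd (by omega) (by omega)),
      List.nodup_reverse.mpr (nodup_ascList_map hd (by omega) (by omega)), ?_⟩
    intro a ha b hb rfl
    rw [List.mem_reverse, mem_ascList_map_val hd (by omega) (by omega)] at ha
    rw [List.mem_reverse, mem_ascList_map_val hd (by omega) (by omega)] at hb
    omega
  case ln =>
    rw [List.length_append, List.length_reverse, List.length_reverse,
      length_ascList_map, length_ascList_map]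
    omega
  rw [List.mem_append, List.mem_reverse, List.mem_reverse,
    mem_ascList_map_val hd (by omega) (by omega), mem_ascList_map_val hd (by omega) (by omega)]

lemma FII3_mem {x : Fin d} :
    x ∈ (FII d hd e1 e3 e4 k m 3).support ↔ 1 ≤ x.val + 1 ∧ x.val + 1 ≤ e4 := by
  show x ∈ ((ascList 1 e4).map (toFin d hd)).formPerm.support ↔ _
  rw [mem_support_formPerm (nodup_ascList_map hd (by omega) (by omega))
    (by rw [length_ascList_map]; omega)]
  rw [mem_ascList_map_val hd (by omega) (by omega)]

lemma FII_inter03 :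
    (FII d hd e1 e3 e4 k m 0).support ∩ (FII d hd e1 e3 e4 k m 3).support
      = ((ascList m e4).map (toFin d hd)).toFinset := by
  ext x
  rw [Finset.mem_inter, FII0_mem hd h1 h12 h23 h34 h4d hS hk1 hk2 hm1 hm2 hm3,
    FII3_mem hd h1 h12 h23 h34 h4d hS hk1 hk2 hm1 hm2 hm3,
    List.mem_toFinset, mem_ascList_map_val hd (by omega) (by omega)]
  omega

lemma FII_inter13 :
    (FII d hd e1 e3 e4 k m 1).support ∩ (FII d hd e1 e3 e4 k m 3).support
      = ((ascList k (m + d + k - e3 - e4)).map (toFin d hd)).toFinset := by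
  ext x
  rw [Finset.mem_inter, FII1_mem hd h1 h12 h23 h34 h4d hS hk1 hk2 hm1 hm2 hm3,
    FII3_mem hd h1 h12 h23 h34 h4d hS hk1 hk2 hm1 hm2 hm3,
    List.mem_toFinset, mem_ascList_map_val hd (by omega) (by omega)]
  omega

lemma FII_inter01 :
    (FII d hd e1 e3 e4 k m 0).support ∩ (FII d hd e1 e3 e4 k m 1).support = ∅ := by
  ext x
  rw [Finset.mem_inter, FII0_mem hd h1 h12 h23 h34 h4d hS hk1 hk2 hm1 hm2 hm3,
    FII1_mem hd h1 h12 h23 h34 h4d hS hk1 hk2 hm1 hm2 hm3]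
  simp only [Finset.notMem_empty, iff_false]
  omega

end Km

end FamII
section FamIIMain

variable {d e1 e2 e3 e4 : ℕ} (hd : 0 < d)
variable (h1 : 2 ≤ e1) (h12 : e1 ≤ e2) (h23 : e2 ≤ e3) (h34 : e3 ≤ e4) (h4d : e4 ≤ d)
variable (hS : e1 + e2 + e3 + e4 = 2 * d + 2)

include h1 h12 h23 h34 h4d hS in
lemma famII_inj {k m k' m' : ℕ}
    (hk1 : 1 ≤ k) (hk2 : k + d + 1 ≤ e3 + e4) (hm1 : e4 + 1 ≤ m + e1)
    (hm2 : m + e1 ≤ d + 1) (hm3 : m ≤ e4)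
    (hk1' : 1 ≤ k') (hk2' : k' + d + 1 ≤ e3 + e4) (hm1' : e4 + 1 ≤ m' + e1)
    (hm2' : m' + e1 ≤ d + 1) (hm3' : m' ≤ e4)
    (τ : Equiv.Perm (Fin d))
    (hτ : ∀ i, FII d hd e1 e3 e4 k' m' i = τ * FII d hd e1 e3 e4 k m i * τ⁻¹) :
    k = k' ∧ m = m' := by
  have he42 : 2 ≤ e4 := by omega
  have hsup : ∀ i, (FII d hd e1 e3 e4 k' m' i).support
      = (FII d hd e1 e3 e4 k m i).support.map τ.toEmbedding := by
    intro i; rw [hτ i]; exact Equiv.Perm.support_conj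
  -- recover m
  have hmap03 : ((FII d hd e1 e3 e4 k m 0).support ∩ (FII d hd e1 e3 e4 k m 3).support).map
      τ.toEmbedding
      = (FII d hd e1 e3 e4 k' m' 0).support ∩ (FII d hd e1 e3 e4 k' m' 3).support := by
    rw [hsup 0, hsup 3, Finset.map_inter]
  have hcard : e4 + 1 - m = e4 + 1 - m' := by
    have h1c := FII_inter03 hd h1 h12 h23 h34 h4d hS hk1 hk2 hm1 hm2 hm3
    have h2c := FII_inter03 hd h1 h12 h23 h34 h4d hS hk1' hk2' hm1' hm2' hm3'
    have := congrArg Finset.card hmap03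
    rw [Finset.card_map, h1c, h2c, List.toFinset_card_of_nodup
        (nodup_ascList_map hd (by omega) (by omega)),
      List.toFinset_card_of_nodup (nodup_ascList_map hd (by omega) (by omega))] at this
    simpa [ascList] using this
  have hmm : m = m' := by omega
  subst hmm
  refine ⟨?_, rfl⟩
  -- now recover k
  have h3 : ((ascList 1 e4).map (toFin d hd)).formPerm
      = τ * ((ascList 1 e4).map (toFin d hd)).formPerm * τ⁻¹ := hτ 3
  -- Y = N[m, e4] is invariant
  have hYmap : (((ascList m e4).map (toFin d hd)).toFinset).map τ.toEmbedding
      = ((ascList m e4).map (toFin d hd)).toFinset := by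
    conv_lhs => rw [← FII_inter03 hd h1 h12 h23 h34 h4d hS hk1 hk2 hm1 hm2 hm3]
    rw [hmap03, FII_inter03 hd h1 h12 h23 h34 h4d hS hk1' hk2' hm1' hm2' hm3']
  have hYmem : ∀ x, x ∈ ((ascList m e4).map (toFin d hd)).toFinset ↔
      τ x ∈ ((ascList m e4).map (toFin d hd)).toFinset := by
    intro x
    conv_rhs => rw [← hYmap]
    exact (Finset.mem_map' _).symm
  -- τ fixes N m
  have hNm : toFin d hd m ∈ ((ascList m e4).map (toFin d hd)).toFinset := by
    rw [List.mem_toFinset, mem_ascList_map]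
    exact ⟨m, le_refl m, hm3, rfl⟩
  have hτNm : τ (toFin d hd m) = toFin d hd m := by
    refine sigma4_boundary (a := m) (b := e4) hd h4d he42 (by omega) (by omega) (by omega)
      (by omega) ((hYmem _).mp hNm) ?_
    rw [← conj_comm_inv_apply h3]
    intro hmem
    exact sigma4_boundary_mem (a := m) (b := e4) hd h4d he42 (by omega) (by omega) (by omega)
      (by omega) ((hYmem _).mpr hmem)
  -- τ maps N k to N k'
  have hmap13 : ((FII d hd e1 e3 e4 k m 1).support ∩ (FII d hd e1 e3 e4 k m 3).support).map
      τ.toEmbedding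
      = (FII d hd e1 e3 e4 k' m 1).support ∩ (FII d hd e1 e3 e4 k' m 3).support := by
    rw [hsup 1, hsup 3, Finset.map_inter]
  have hXmap : (((ascList k (m + d + k - e3 - e4)).map (toFin d hd)).toFinset).map τ.toEmbedding
      = ((ascList k' (m + d + k' - e3 - e4)).map (toFin d hd)).toFinset := by
    rw [← FII_inter13 hd h1 h12 h23 h34 h4d hS hk1 hk2 hm1 hm2 hm3, hmap13,
      FII_inter13 hd h1 h12 h23 h34 h4d hS hk1' hk2' hm1' hm2' hm3']
  have hNk : toFin d hd k ∈ ((ascList k (m + d + k - e3 - e4)).map (toFin d hd)).toFinset := by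
    rw [List.mem_toFinset, mem_ascList_map]
    exact ⟨k, le_refl k, by omega, rfl⟩
  have hτNk : τ (toFin d hd k) = toFin d hd k' := by
    refine sigma4_boundary (a := k') (b := m + d + k' - e3 - e4) hd h4d he42 (by omega)
      (by omega) (by omega) (by omega)
      (by rw [← hXmap]; exact Finset.mem_map_of_mem _ hNk) ?_
    rw [← conj_comm_inv_apply h3]
    intro hmem
    rw [← hXmap] at hmem
    exact sigma4_boundary_mem (a := k) (b := m + d + k - e3 - e4) hd h4d he42 (by omega)
      (by omega) (by omega) (by omega) ((Finset.mem_map' _).mp hmem)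
  -- but τ also fixes N k
  have hpow : (((ascList 1 e4).map (toFin d hd)).formPerm ^ (e4 - m + k)) (toFin d hd m)
      = toFin d hd k := by
    rw [sigma4_pow_apply hd h4d he42 (by omega) hm3]
    congr 1
    have hrw : m - 1 + (e4 - m + k) = e4 + (k - 1) := by omega
    rw [hrw, Nat.add_mod_left, Nat.mod_eq_of_lt (by omega)]
    omega
  have hfix : τ (toFin d hd k) = toFin d hd k := by
    rw [← hpow, conj_comm_pow_apply h3, hτNm]
  rw [hfix] at hτNk
  exact toFin_inj hd hk1 (by omega) hk1' (by omega) hτNk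

end FamIIMain
section FamI

variable {d e1 e2 e3 e4 : ℕ} (hd : 0 < d)
variable (h1 : 2 ≤ e1) (h12 : e1 ≤ e2) (h23 : e2 ≤ e3) (h34 : e3 ≤ e4) (h4d : e4 ≤ d)
variable (hS : e1 + e2 + e3 + e4 = 2 * d + 2)

section Kl
variable {k l : ℕ}
variable (hkA : e3 + e4 ≤ k + d) (hk3 : k ≤ e3) (hke2 : k + e2 ≤ d + 1)
  (hlk : k ≤ l) (hl2 : l + k ≤ e3 + e4)

include h1 h12 h23 h34 h4d hS hkA hk3 hke2 hlk hl2

/-- the auxiliary cycle applied backwards to `ℓ`, in coordinates of the list `S`. -/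
lemma g_eq {j : ℕ} (hj : j ≤ e3 + e4 - k + 1 - k) :
    ((sigmaAux d hd e3 e4 k ^ j)⁻¹ (toFin d hd l))
      = toFin d hd (k + (l - k + (e3 + e4 - k + 1 - k - j)) % (e3 + e4 - k + 1 - k)) := by
  set L := e3 + e4 - k + 1 - k with hL
  have hk1 : 1 ≤ k := by omega
  have hLpos : 0 < L := by omega
  have ha : l - k < L := by omega
  have hlen : ((ascList k (e3 + e4 - k)).map (toFin d hd)).length = L := by
    rw [length_ascList_map]
  have hnd : ((ascList k (e3 + e4 - k)).map (toFin d hd)).Nodup :=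
    nodup_ascList_map hd (by omega) (by omega)
  have hidx : (l - k + (L - j)) % L < ((ascList k (e3 + e4 - k)).map (toFin d hd)).length := by
    rw [hlen]; exact Nat.mod_lt _ hLpos
  have happ := List.formPerm_pow_apply_getElem _ hnd j _ hidx
  rw [getElem_ascList_map, getElem_ascList_map] at happ
  have hmod : ((l - k + (L - j)) % L + j) % ((ascList k (e3 + e4 - k)).map (toFin d hd)).length
      = l - k := by
    rw [hlen, Nat.mod_add_mod]
    have : l - k + (L - j) + j = l - k + L := by omega
    rw [this, Nat.add_mod_right, Nat.mod_eq_of_lt ha]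
  rw [hmod] at happ
  have hlf : k + (l - k) = l := by omega
  rw [hlf] at happ
  show ((((ascList k (e3 + e4 - k)).map (toFin d hd)).formPerm ^ j)⁻¹ (toFin d hd l)) = _
  rw [← happ, (show ∀ (q : Equiv.Perm (Fin d)) y, q⁻¹ (q y) = y from fun q y => q.symm_apply_apply y)]

lemma g_zero : ((sigmaAux d hd e3 e4 k ^ 0)⁻¹ (toFin d hd l)) = toFin d hd l := by
  simp

lemma g_val {j : ℕ} (hj : j ≤ e3 + e4 - k + 1 - k) :
    k ≤ ((sigmaAux d hd e3 e4 k ^ j)⁻¹ (toFin d hd l)).val + 1 ∧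
    ((sigmaAux d hd e3 e4 k ^ j)⁻¹ (toFin d hd l)).val + 1 ≤ e3 + e4 - k := by
  rw [g_eq hd h1 h12 h23 h34 h4d hS hkA hk3 hke2 hlk hl2 hj]
  have hmod : (l - k + (e3 + e4 - k + 1 - k - j)) % (e3 + e4 - k + 1 - k)
      < e3 + e4 - k + 1 - k := Nat.mod_lt _ (by omega)
  rw [toFin_val hd (by omega)]
  omega

lemma g_inj {j j' : ℕ} (hj : j ≤ e3 + e4 - k + 1 - k) (hj' : j' ≤ e3 + e4 - k + 1 - k)
    (h : (sigmaAux d hd e3 e4 k ^ j)⁻¹ (toFin d hd l)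
       = (sigmaAux d hd e3 e4 k ^ j')⁻¹ (toFin d hd l)) :
    j = j' ∨ (j = 0 ∧ j' = e3 + e4 - k + 1 - k) ∨ (j = e3 + e4 - k + 1 - k ∧ j' = 0) := by
  rw [g_eq hd h1 h12 h23 h34 h4d hS hkA hk3 hke2 hlk hl2 hj,
    g_eq hd h1 h12 h23 h34 h4d hS hkA hk3 hke2 hlk hl2 hj'] at h
  have hLpos : 0 < e3 + e4 - k + 1 - k := by omega
  have h1m : (l - k + (e3 + e4 - k + 1 - k - j)) % (e3 + e4 - k + 1 - k)
      < e3 + e4 - k + 1 - k := Nat.mod_lt _ hLpos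
  have h2m : (l - k + (e3 + e4 - k + 1 - k - j')) % (e3 + e4 - k + 1 - k)
      < e3 + e4 - k + 1 - k := Nat.mod_lt _ hLpos
  have := toFin_inj hd (by omega) (by omega) (by omega) (by omega) h
  have hcan := aux_idx_cancel (Lv := e3 + e4 - k + 1 - k) (a := l - k)
    (u := e3 + e4 - k + 1 - k - j) (u' := e3 + e4 - k + 1 - k - j')
    (by omega) (by omega) (by omega) (by omega)
  omega

lemma g_top : ((sigmaAux d hd e3 e4 k ^ (e3 + e4 - k + 1 - k))⁻¹ (toFin d hd l))
    = toFin d hd l := by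
  rw [g_eq hd h1 h12 h23 h34 h4d hS hkA hk3 hke2 hlk hl2 (le_refl _)]
  congr 1
  have : e3 + e4 - k + 1 - k - (e3 + e4 - k + 1 - k) = 0 := by omega
  rw [this, Nat.add_zero, Nat.mod_eq_of_lt (by omega)]
  omega

end Kl

end FamI
section FamIB

variable {d e1 e2 e3 e4 : ℕ} (hd : 0 < d)
variable (h1 : 2 ≤ e1) (h12 : e1 ≤ e2) (h23 : e2 ≤ e3) (h34 : e3 ≤ e4) (h4d : e4 ≤ d)
variable (hS : e1 + e2 + e3 + e4 = 2 * d + 2)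

section Kl
variable {k l : ℕ}
variable (hkA : e3 + e4 ≤ k + d) (hk3 : k ≤ e3) (hke2 : k + e2 ≤ d + 1)
  (hlk : k ≤ l) (hl2 : l + k ≤ e3 + e4)

include h1 h12 h23 h34 h4d hS hkA hk3 hke2 hlk hl2

lemma FI0_nodup :
    ((descList d (e3 + e4 + 1 - k)).map (toFin d hd) ++
      (List.range' (d + 2 - k - e1) (e1 + e3 + e4 - k - d)).map
        (fun j => ((sigmaAux d hd e3 e4 k) ^ j)⁻¹ (toFin d hd l))).Nodup := by
  rw [descList_map hd, List.nodup_append]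
  refine ⟨List.nodup_reverse.mpr (nodup_ascList_map hd (by omega) (by omega)), ?_, ?_⟩
  · refine List.Nodup.map_on ?_ (List.nodup_range' 1)
    intro j hj j' hj' heq
    rw [List.mem_range'_1] at hj hj'
    have := g_inj hd h1 h12 h23 h34 h4d hS hkA hk3 hke2 hlk hl2
      (j := j) (j' := j') (by omega) (by omega) heq
    omega
  · intro a ha b hb rfl
    rw [List.mem_reverse, mem_ascList_map_val hd (by omega) (by omega)] at ha
    simp only [List.mem_map, List.mem_range'_1] at hb
    obtain ⟨j, hj, rfl⟩ := hb
    have := g_val hd h1 h12 h23 h34 h4d hS hkA hk3 hke2 hlk hl2 (j := j) (by omega)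
    omega

lemma FI1_nodup :
    ((ascList (e3 + e4 + 1 - k) d).map (toFin d hd) ++
      (List.range' 0 (d + 2 - k - e1)).map
        (fun j => ((sigmaAux d hd e3 e4 k) ^ j)⁻¹ (toFin d hd l))).Nodup := by
  rw [List.nodup_append]
  refine ⟨nodup_ascList_map hd (by omega) (by omega), ?_, ?_⟩
  · refine List.Nodup.map_on ?_ (List.nodup_range' 1)
    intro j hj j' hj' heq
    rw [List.mem_range'_1] at hj hj'
    have := g_inj hd h1 h12 h23 h34 h4d hS hkA hk3 hke2 hlk hl2
      (j := j) (j' := j') (by omega) (by omega) heq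
    omega
  · intro a ha b hb rfl
    rw [mem_ascList_map_val hd (by omega) (by omega)] at ha
    simp only [List.mem_map, List.mem_range'_1] at hb
    obtain ⟨j, hj, rfl⟩ := hb
    have := g_val hd h1 h12 h23 h34 h4d hS hkA hk3 hke2 hlk hl2 (j := j) (by omega)
    omega

lemma FI0_length :
    ((descList d (e3 + e4 + 1 - k)).map (toFin d hd) ++
      (List.range' (d + 2 - k - e1) (e1 + e3 + e4 - k - d)).map
        (fun j => ((sigmaAux d hd e3 e4 k) ^ j)⁻¹ (toFin d hd l))).length = e1 := by
  rw [List.length_append, descList_map hd, List.length_reverse, length_ascList_map,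
    List.length_map, List.length_range']
  omega

lemma FI1_length :
    ((ascList (e3 + e4 + 1 - k) d).map (toFin d hd) ++
      (List.range' 0 (d + 2 - k - e1)).map
        (fun j => ((sigmaAux d hd e3 e4 k) ^ j)⁻¹ (toFin d hd l))).length = e2 := by
  rw [List.length_append, length_ascList_map, List.length_map, List.length_range']
  omega

lemma FI0_mem_l : toFin d hd l ∈ (FI d hd e1 e3 e4 k l 0).support := by
  show toFin d hd l ∈ (((descList d (e3 + e4 + 1 - k)).map (toFin d hd) ++
      (List.range' (d + 2 - k - e1) (e1 + e3 + e4 - k - d)).map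
        (fun j => ((sigmaAux d hd e3 e4 k) ^ j)⁻¹ (toFin d hd l))).formPerm).support
  rw [mem_support_formPerm (FI0_nodup hd h1 h12 h23 h34 h4d hS hkA hk3 hke2 hlk hl2)
    (by rw [FI0_length hd h1 h12 h23 h34 h4d hS hkA hk3 hke2 hlk hl2]; omega)]
  rw [List.mem_append]
  right
  rw [List.mem_map]
  refine ⟨e3 + e4 - k + 1 - k, ?_, g_top hd h1 h12 h23 h34 h4d hS hkA hk3 hke2 hlk hl2⟩
  rw [List.mem_range'_1]
  omega

lemma FI1_mem_l : toFin d hd l ∈ (FI d hd e1 e3 e4 k l 1).support := by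
  show toFin d hd l ∈ (((ascList (e3 + e4 + 1 - k) d).map (toFin d hd) ++
      (List.range' 0 (d + 2 - k - e1)).map
        (fun j => ((sigmaAux d hd e3 e4 k) ^ j)⁻¹ (toFin d hd l))).formPerm).support
  rw [mem_support_formPerm (FI1_nodup hd h1 h12 h23 h34 h4d hS hkA hk3 hke2 hlk hl2)
    (by rw [FI1_length hd h1 h12 h23 h34 h4d hS hkA hk3 hke2 hlk hl2]; omega)]
  rw [List.mem_append]
  right
  rw [List.mem_map]
  exact ⟨0, by rw [List.mem_range'_1]; omega,
    g_zero hd h1 h12 h23 h34 h4d hS hkA hk3 hke2 hlk hl2⟩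

lemma FI2_mem {x : Fin d} :
    x ∈ (FI d hd e1 e3 e4 k l 2).support ↔
      (1 ≤ x.val + 1 ∧ x.val + 1 ≤ k) ∨ (e4 + 1 ≤ x.val + 1 ∧ x.val + 1 ≤ e3 + e4 - k) := by
  show x ∈ ((descList k 1 ++ ascList (e4 + 1) (e3 + e4 - k)).map (toFin d hd)).formPerm.support ↔ _
  rw [List.map_append, descList_map hd]
  rw [mem_support_formPerm ?nd ?ln]
  case nd =>
    rw [List.nodup_append]
    refine ⟨List.nodup_reverse.mpr (nodup_ascList_map hd (by omega) (by omega)),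
      nodup_ascList_map hd (by omega) (by omega), ?_⟩
    intro a ha b hb rfl
    rw [List.mem_reverse, mem_ascList_map_val hd (by omega) (by omega)] at ha
    rw [mem_ascList_map_val hd (by omega) (by omega)] at hb
    omega
  case ln =>
    rw [List.length_append, List.length_reverse, length_ascList_map, length_ascList_map]
    omega
  rw [List.mem_append, List.mem_reverse, mem_ascList_map_val hd (by omega) (by omega),
    mem_ascList_map_val hd (by omega) (by omega)]

lemma FI3_mem {x : Fin d} :
    x ∈ (FI d hd e1 e3 e4 k l 3).support ↔ 1 ≤ x.val + 1 ∧ x.val + 1 ≤ e4 := by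
  show x ∈ ((ascList 1 e4).map (toFin d hd)).formPerm.support ↔ _
  rw [mem_support_formPerm (nodup_ascList_map hd (by omega) (by omega))
    (by rw [length_ascList_map]; omega)]
  rw [mem_ascList_map_val hd (by omega) (by omega)]

lemma FI_inter23 :
    (FI d hd e1 e3 e4 k l 2).support ∩ (FI d hd e1 e3 e4 k l 3).support
      = ((ascList 1 k).map (toFin d hd)).toFinset := by
  ext x
  rw [Finset.mem_inter, FI2_mem hd h1 h12 h23 h34 h4d hS hkA hk3 hke2 hlk hl2,
    FI3_mem hd h1 h12 h23 h34 h4d hS hkA hk3 hke2 hlk hl2,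
    List.mem_toFinset, mem_ascList_map_val hd (by omega) (by omega)]
  omega

lemma FI_union23 :
    (FI d hd e1 e3 e4 k l 2).support ∪ (FI d hd e1 e3 e4 k l 3).support
      = ((ascList 1 (e3 + e4 - k)).map (toFin d hd)).toFinset := by
  ext x
  rw [Finset.mem_union, FI2_mem hd h1 h12 h23 h34 h4d hS hkA hk3 hke2 hlk hl2,
    FI3_mem hd h1 h12 h23 h34 h4d hS hkA hk3 hke2 hlk hl2,
    List.mem_toFinset, mem_ascList_map_val hd (by omega) (by omega)]
  omega

lemma FI_unique {x : Fin d} (hx0 : x ∈ (FI d hd e1 e3 e4 k l 0).support)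
    (hx1 : x ∈ (FI d hd e1 e3 e4 k l 1).support)
    (hxT : x.val + 1 ≤ e3 + e4 - k) : x = toFin d hd l := by
  rw [show FI d hd e1 e3 e4 k l 0 = (((descList d (e3 + e4 + 1 - k)).map (toFin d hd) ++
      (List.range' (d + 2 - k - e1) (e1 + e3 + e4 - k - d)).map
        (fun j => ((sigmaAux d hd e3 e4 k) ^ j)⁻¹ (toFin d hd l))).formPerm) from rfl,
    mem_support_formPerm (FI0_nodup hd h1 h12 h23 h34 h4d hS hkA hk3 hke2 hlk hl2)
      (by rw [FI0_length hd h1 h12 h23 h34 h4d hS hkA hk3 hke2 hlk hl2]; omega),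
    List.mem_append] at hx0
  rw [show FI d hd e1 e3 e4 k l 1 = (((ascList (e3 + e4 + 1 - k) d).map (toFin d hd) ++
      (List.range' 0 (d + 2 - k - e1)).map
        (fun j => ((sigmaAux d hd e3 e4 k) ^ j)⁻¹ (toFin d hd l))).formPerm) from rfl,
    mem_support_formPerm (FI1_nodup hd h1 h12 h23 h34 h4d hS hkA hk3 hke2 hlk hl2)
      (by rw [FI1_length hd h1 h12 h23 h34 h4d hS hkA hk3 hke2 hlk hl2]; omega),
    List.mem_append] at hx1
  rcases hx0 with hx0 | hx0
  · rw [descList_map hd, List.mem_reverse,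
      mem_ascList_map_val hd (by omega) (by omega)] at hx0
    omega
  rcases hx1 with hx1 | hx1
  · rw [mem_ascList_map_val hd (by omega) (by omega)] at hx1
    omega
  simp only [List.mem_map, List.mem_range'_1] at hx0 hx1
  obtain ⟨j, hj, rfl⟩ := hx0
  obtain ⟨j', hj', heq⟩ := hx1
  have := g_inj hd h1 h12 h23 h34 h4d hS hkA hk3 hke2 hlk hl2
    (j := j') (j' := j) (by omega) (by omega) heq
  have hj0 : j' = 0 := by omega
  rw [hj0] at heq
  rw [← heq, g_zero hd h1 h12 h23 h34 h4d hS hkA hk3 hke2 hlk hl2]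

end Kl

end FamIB
section FamIMain

variable {d e1 e2 e3 e4 : ℕ} (hd : 0 < d)
variable (h1 : 2 ≤ e1) (h12 : e1 ≤ e2) (h23 : e2 ≤ e3) (h34 : e3 ≤ e4) (h4d : e4 ≤ d)
variable (hS : e1 + e2 + e3 + e4 = 2 * d + 2)

include h1 h12 h23 h34 h4d hS in
lemma sigma3_pow_N1 {k l : ℕ}
    (hkA : e3 + e4 ≤ k + d) (hk3 : k ≤ e3) (hke2 : k + e2 ≤ d + 1)
    (hlk : k ≤ l) (hl2 : l + k ≤ e3 + e4) (hle4 : e4 + 1 ≤ l) :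
    ((((descList k 1 ++ ascList (e4 + 1) (e3 + e4 - k)).map (toFin d hd)).formPerm ^ (l - e4))
      (toFin d hd 1)) = toFin d hd l := by
  have hk1 : 1 ≤ k := by omega
  rw [List.map_append, descList_map hd]
  set lst := ((ascList 1 k).map (toFin d hd)).reverse ++ (ascList (e4 + 1) (e3 + e4 - k)).map (toFin d hd) with hlst
  have hlen1 : (((ascList 1 k).map (toFin d hd)).reverse).length = k := by
    rw [List.length_reverse, length_ascList_map]; omega
  have hlen2 : ((ascList (e4 + 1) (e3 + e4 - k)).map (toFin d hd)).length = e3 - k := by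
    rw [length_ascList_map]; omega
  have hlen : lst.length = e3 := by
    rw [hlst, List.length_append, hlen1, hlen2]; omega
  have hnd : lst.Nodup := by
    rw [hlst, List.nodup_append]
    refine ⟨List.nodup_reverse.mpr (nodup_ascList_map hd (by omega) (by omega)),
      nodup_ascList_map hd (by omega) (by omega), ?_⟩
    intro a ha b hb rfl
    rw [List.mem_reverse, mem_ascList_map_val hd (by omega) (by omega)] at ha
    rw [mem_ascList_map_val hd (by omega) (by omega)] at hb
    omega
  have hidx : k - 1 < lst.length := by omega
  have hN1 : lst[k-1] = toFin d hd 1 := by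
    simp only [hlst]
    rw [List.getElem_append_left (by omega : k - 1 < (((ascList 1 k).map (toFin d hd)).reverse).length)]
    rw [List.getElem_reverse, getElem_ascList_map]
    congr 1
    rw [List.length_map, length_ascList]
    omega
  have hkey : ∀ (i : ℕ) (hi : i < lst.length), i = k - 1 + (l - e4) → lst[i] = toFin d hd l := by
    rintro i hi rfl
    simp only [hlst]
    rw [List.getElem_append_right (by omega : (((ascList 1 k).map (toFin d hd)).reverse).length ≤ k - 1 + (l - e4))]
    rw [getElem_ascList_map]
    congr 1
    rw [hlen1]
    omega
  rw [← hN1, List.formPerm_pow_apply_getElem _ hnd _ _ hidx]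
  exact hkey _ _ (by rw [hlen]; exact Nat.mod_eq_of_lt (by omega))

end FamIMain
section FamIInj

variable {d e1 e2 e3 e4 : ℕ} (hd : 0 < d)
variable (h1 : 2 ≤ e1) (h12 : e1 ≤ e2) (h23 : e2 ≤ e3) (h34 : e3 ≤ e4) (h4d : e4 ≤ d)
variable (hS : e1 + e2 + e3 + e4 = 2 * d + 2)

include h1 h12 h23 h34 h4d hS in
lemma famI_inj {k l k' l' : ℕ}
    (hkA : e3 + e4 ≤ k + d) (hk3 : k ≤ e3) (hke2 : k + e2 ≤ d + 1)
    (hlk : k ≤ l) (hl2 : l + k ≤ e3 + e4)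
    (hkA' : e3 + e4 ≤ k' + d) (hk3' : k' ≤ e3) (hke2' : k' + e2 ≤ d + 1)
    (hlk' : k' ≤ l') (hl2' : l' + k' ≤ e3 + e4)
    (τ : Equiv.Perm (Fin d))
    (hτ : ∀ i, FI d hd e1 e3 e4 k' l' i = τ * FI d hd e1 e3 e4 k l i * τ⁻¹) :
    k = k' ∧ l = l' := by
  have he42 : 2 ≤ e4 := by omega
  have hsup : ∀ i, (FI d hd e1 e3 e4 k' l' i).support
      = (FI d hd e1 e3 e4 k l i).support.map τ.toEmbedding := by
    intro i; rw [hτ i]; exact Equiv.Perm.support_conj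
  have hmap23 : ((FI d hd e1 e3 e4 k l 2).support ∩ (FI d hd e1 e3 e4 k l 3).support).map
      τ.toEmbedding
      = (FI d hd e1 e3 e4 k' l' 2).support ∩ (FI d hd e1 e3 e4 k' l' 3).support := by
    rw [hsup 2, hsup 3, Finset.map_inter]
  have hkk : k = k' := by
    have h1c := FI_inter23 hd h1 h12 h23 h34 h4d hS hkA hk3 hke2 hlk hl2
    have h2c := FI_inter23 hd h1 h12 h23 h34 h4d hS hkA' hk3' hke2' hlk' hl2'
    have := congrArg Finset.card hmap23
    rw [Finset.card_map, h1c, h2c,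
      card_toFinset_ascList_map hd (by omega) (by omega),
      card_toFinset_ascList_map hd (by omega) (by omega)] at this
    omega
  subst hkk
  refine ⟨rfl, ?_⟩
  by_cases hdeg : e3 + e4 = 2 * k
  · omega
  have hke4 : k < e4 := by omega
  have hk1 : 1 ≤ k := by omega
  -- τ commutes with σ3 and σ4
  have hc2 : ((descList k 1 ++ ascList (e4 + 1) (e3 + e4 - k)).map (toFin d hd)).formPerm
      = τ * ((descList k 1 ++ ascList (e4 + 1) (e3 + e4 - k)).map (toFin d hd)).formPerm * τ⁻¹ :=
    hτ 2
  have hc3 : ((ascList 1 e4).map (toFin d hd)).formPerm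
      = τ * ((ascList 1 e4).map (toFin d hd)).formPerm * τ⁻¹ := hτ 3
  -- M = N[1,k] is invariant
  have hMmap : (((ascList 1 k).map (toFin d hd)).toFinset).map τ.toEmbedding
      = ((ascList 1 k).map (toFin d hd)).toFinset := by
    conv_lhs => rw [← FI_inter23 hd h1 h12 h23 h34 h4d hS hkA hk3 hke2 hlk hl2]
    rw [hmap23, FI_inter23 hd h1 h12 h23 h34 h4d hS hkA' hk3' hke2' hlk' hl2']
  have hMmem : ∀ x, x ∈ ((ascList 1 k).map (toFin d hd)).toFinset ↔
      τ x ∈ ((ascList 1 k).map (toFin d hd)).toFinset := by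
    intro x
    conv_rhs => rw [← hMmap]
    exact (Finset.mem_map' _).symm
  -- τ fixes N 1
  have hN1 : toFin d hd 1 ∈ ((ascList 1 k).map (toFin d hd)).toFinset := by
    rw [List.mem_toFinset, mem_ascList_map]
    exact ⟨1, le_refl 1, hk1, rfl⟩
  have hτN1 : τ (toFin d hd 1) = toFin d hd 1 := by
    refine sigma4_boundary (a := 1) (b := k) hd h4d he42 (by omega) (by omega) (by omega)
      (by omega) ((hMmem _).mp hN1) ?_
    rw [← conj_comm_inv_apply hc3]
    intro hmem
    exact sigma4_boundary_mem (a := 1) (b := k) hd h4d he42 (by omega) (by omega) (by omega)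
      (by omega) ((hMmem _).mpr hmem)
  -- T = N[1, e3+e4-k] is invariant
  have hmapU : ((FI d hd e1 e3 e4 k l 2).support ∪ (FI d hd e1 e3 e4 k l 3).support).map
      τ.toEmbedding
      = (FI d hd e1 e3 e4 k l' 2).support ∪ (FI d hd e1 e3 e4 k l' 3).support := by
    rw [hsup 2, hsup 3, Finset.map_union]
  have hTmap : (((ascList 1 (e3 + e4 - k)).map (toFin d hd)).toFinset).map τ.toEmbedding
      = ((ascList 1 (e3 + e4 - k)).map (toFin d hd)).toFinset := by
    conv_lhs => rw [← FI_union23 hd h1 h12 h23 h34 h4d hS hkA hk3 hke2 hlk hl2]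
    rw [hmapU, FI_union23 hd h1 h12 h23 h34 h4d hS hkA' hk3' hke2' hlk' hl2']
  -- τ (N l) = N l'
  have hτNl : τ (toFin d hd l) = toFin d hd l' := by
    refine FI_unique hd h1 h12 h23 h34 h4d hS hkA' hk3' hke2' hlk' hl2' ?_ ?_ ?_
    · rw [hsup 0]
      exact Finset.mem_map_of_mem _
        (FI0_mem_l hd h1 h12 h23 h34 h4d hS hkA hk3 hke2 hlk hl2)
    · rw [hsup 1]
      exact Finset.mem_map_of_mem _
        (FI1_mem_l hd h1 h12 h23 h34 h4d hS hkA hk3 hke2 hlk hl2)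
    · have hNlT : toFin d hd l ∈ ((ascList 1 (e3 + e4 - k)).map (toFin d hd)).toFinset := by
        rw [List.mem_toFinset, mem_ascList_map]
        exact ⟨l, by omega, by omega, rfl⟩
      have : τ (toFin d hd l) ∈ ((ascList 1 (e3 + e4 - k)).map (toFin d hd)).toFinset := by
        rw [← hTmap]
        exact Finset.mem_map_of_mem _ hNlT
      rw [List.mem_toFinset, mem_ascList_map_val hd (by omega) (by omega)] at this
      omega
  -- τ fixes N l
  have hτNlfix : τ (toFin d hd l) = toFin d hd l := by
    rcases le_or_gt l e4 with hle | hgt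
    · have hpow : (((ascList 1 e4).map (toFin d hd)).formPerm ^ (l - 1)) (toFin d hd 1)
          = toFin d hd l := by
        rw [sigma4_pow_apply hd h4d he42 (by omega) (by omega)]
        congr 1
        have : 1 - 1 + (l - 1) = l - 1 := by omega
        rw [this, Nat.mod_eq_of_lt (by omega)]
        omega
      rw [← hpow, conj_comm_pow_apply hc3, hτN1]
    · have hpow := sigma3_pow_N1 hd h1 h12 h23 h34 h4d hS hkA hk3 hke2 hlk hl2 (by omega)
      rw [← hpow, conj_comm_pow_apply hc2, hτN1]
  rw [hτNlfix] at hτNl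
  exact toFin_inj hd (by omega) (by omega) (by omega) (by omega) hτNl

include h1 h12 h23 h34 h4d hS in
lemma famI_II {k l k' m' : ℕ}
    (hkA : e3 + e4 ≤ k + d) (hk3 : k ≤ e3) (hke2 : k + e2 ≤ d + 1)
    (hlk : k ≤ l) (hl2 : l + k ≤ e3 + e4)
    (hk1' : 1 ≤ k') (hk2' : k' + d + 1 ≤ e3 + e4) (hm1' : e4 + 1 ≤ m' + e1)
    (hm2' : m' + e1 ≤ d + 1) (hm3' : m' ≤ e4)
    (τ : Equiv.Perm (Fin d))
    (hτ : ∀ i, FII d hd e1 e3 e4 k' m' i = τ * FI d hd e1 e3 e4 k l i * τ⁻¹) :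
    False := by
  have hsup : ∀ i, (FII d hd e1 e3 e4 k' m' i).support
      = (FI d hd e1 e3 e4 k l i).support.map τ.toEmbedding := by
    intro i; rw [hτ i]; exact Equiv.Perm.support_conj
  have hmem : τ (toFin d hd l) ∈
      (FII d hd e1 e3 e4 k' m' 0).support ∩ (FII d hd e1 e3 e4 k' m' 1).support := by
    rw [Finset.mem_inter, hsup 0, hsup 1]
    exact ⟨Finset.mem_map_of_mem _ (FI0_mem_l hd h1 h12 h23 h34 h4d hS hkA hk3 hke2 hlk hl2),
      Finset.mem_map_of_mem _ (FI1_mem_l hd h1 h12 h23 h34 h4d hS hkA hk3 hke2 hlk hl2)⟩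
  rw [FII_inter01 hd h1 h12 h23 h34 h4d hS hk1' hk2' hm1' hm2' hm3'] at hmem
  exact absurd hmem (Finset.notMem_empty _)

end FamIInj

/-- No two of the tuples `F_I(k, ℓ)`, `F_II(k, m)` with distinct (admissible)
parameters are equivalent, and no tuple of family I is equivalent to a tuple of
family II. -/
theorem families_pairwise_inequivalent
    (d e1 e2 e3 e4 : ℕ) (hd : 0 < d)
    (h1 : 2 ≤ e1) (h12 : e1 ≤ e2) (h23 : e2 ≤ e3) (h34 : e3 ≤ e4) (h4d : e4 ≤ d)
    (hsum : 2 * d - 2 = (e1 - 1) + (e2 - 1) + (e3 - 1) + (e4 - 1)) :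
    (∀ k l k' l' : ℕ, AdmI d e2 e3 e4 k l → AdmI d e2 e3 e4 k' l' →
      HEquiv (FI d hd e1 e3 e4 k l) (FI d hd e1 e3 e4 k' l') → k = k' ∧ l = l') ∧
    (∀ k m k' m' : ℕ, AdmII d e1 e3 e4 k m → AdmII d e1 e3 e4 k' m' →
      HEquiv (FII d hd e1 e3 e4 k m) (FII d hd e1 e3 e4 k' m') → k = k' ∧ m = m') ∧
    (∀ k l k' m' : ℕ, AdmI d e2 e3 e4 k l → AdmII d e1 e3 e4 k' m' →
      ¬HEquiv (FI d hd e1 e3 e4 k l) (FII d hd e1 e3 e4 k' m')) := by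
  have hS : e1 + e2 + e3 + e4 = 2 * d + 2 := by omega
  refine ⟨?_, ?_, ?_⟩
  · rintro k l k' l' ⟨a1, a2, a3, a4, a5⟩ ⟨b1, b2, b3, b4, b5⟩ ⟨τ, hτ⟩
    exact famI_inj hd h1 h12 h23 h34 h4d hS (by omega) (by omega) (by omega) (by omega)
      (by omega) (by omega) (by omega) (by omega) (by omega) (by omega) τ hτ
  · rintro k m k' m' ⟨a1, a2, a3, a4, a5⟩ ⟨b1, b2, b3, b4, b5⟩ ⟨τ, hτ⟩
    exact famII_inj hd h1 h12 h23 h34 h4d hS (by omega) (by omega) (by omega) (by omega)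
      (by omega) (by omega) (by omega) (by omega) (by omega) (by omega) τ hτ
  · rintro k l k' m' ⟨a1, a2, a3, a4, a5⟩ ⟨b1, b2, b3, b4, b5⟩ ⟨τ, hτ⟩
    exact famI_II hd h1 h12 h23 h34 h4d hS (by omega) (by omega) (by omega) (by omega)
      (by omega) (by omega) (by omega) (by omega) (by omega) (by omega) τ hτ
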